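/- Let 𝒰 and 𝒳₁ be finite sets, let Q(x₁|u) be a conditional pmf on 𝒳₁ given 𝒰, let μ̃ > 0, n ≥ 1, and let uⁿ, vⁿ ∈ 𝒰ⁿ. Define S = { x₁ⁿ ∈ 𝒳₁ⁿ : |P̂_{x₁ⁿ|uⁿ}(x₁|u) − Q(x₁|u)| ≤ μ̃ for all x₁ and all u with P̂_{uⁿ}(u) > 0, and |P̂_{x₁ⁿ|vⁿ}(x₁|v) − Q(x₁|v)| ≤ μ̃ for all x₁ and all v with P̂_{vⁿ}(v) > 0 }. Then |S| ≤ (n+1)^{|𝒳₁||𝒰|²} · 2^{n H*}, where H* is the maximum of H(X̃₁ | Ũ, Ṽ) over all joint pmfs of finite random variables (X̃₁, Ũ, Ṽ), with X̃₁ valued in 𝒳₁ and Ũ, Ṽ valued in 𝒰, such that P_{Ũ,Ṽ} equals the joint type P̂_{uⁿ,vⁿ}, |P_{X̃₁|Ũ}(x₁|u) − Q(x₁|u)| ≤ μ̃ and |P_{X̃₁|Ṽ}(x₁|v) − Q(x₁|v)| ≤ μ̃ wherever defined (H* = 0 if no such pmf exists, in which case S is empty). -/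

import Mathlib

open Finset
open scoped Classical

/-- A probability mass function on a finite alphabet. -/
def IsPMF {α : Type} [Fintype α] (p : α → ℝ) : Prop :=
  (∀ a, 0 ≤ p a) ∧ ∑ a, p a = 1

/-- Shannon entropy (base 2) of a pmf. -/
noncomputable def ent {α : Type} [Fintype α] (p : α → ℝ) : ℝ :=
  -∑ a, p a * Real.logb 2 (p a)

/-- Conditional entropy H(A | B, C) (base 2) for the joint pmf `p a b c`. -/
noncomputable def condEnt3 {α β γ : Type} [Fintype α] [Fintype β] [Fintype γ]
    (p : α → β → γ → ℝ) : ℝ :=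
  (ent fun t : α × β × γ => p t.1 t.2.1 t.2.2) - ent fun t : β × γ => ∑ a, p a t.1 t.2

/-- The type (empirical pmf) of a sequence. -/
noncomputable def seqType {𝒳 : Type} [DecidableEq 𝒳] {n : ℕ}
    (x : Fin n → 𝒳) (a : 𝒳) : ℝ :=
  ((Finset.univ.filter fun i => x i = a).card : ℝ) / n

/-- The joint type (joint empirical pmf) of a pair of sequences. -/
noncomputable def jointType₂ {𝒳 𝒴 : Type} [DecidableEq 𝒳] [DecidableEq 𝒴] {n : ℕ}
    (x : Fin n → 𝒳) (y : Fin n → 𝒴) (a : 𝒳) (b : 𝒴) : ℝ :=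
  ((Finset.univ.filter fun i => x i = a ∧ y i = b).card : ℝ) / n

/-- The joint type (joint empirical pmf) of a triple of sequences. -/
noncomputable def jointType₃ {𝒳 𝒴 𝒵 : Type} [DecidableEq 𝒳] [DecidableEq 𝒴]
    [DecidableEq 𝒵] {n : ℕ}
    (x : Fin n → 𝒳) (y : Fin n → 𝒴) (z : Fin n → 𝒵) (a : 𝒳) (b : 𝒴) (c : 𝒵) : ℝ :=
  ((Finset.univ.filter fun i => x i = a ∧ y i = b ∧ z i = c).card : ℝ) / n


lemma ent_nonneg {α : Type} [Fintype α] {p : α → ℝ} (h : IsPMF p) : 0 ≤ ent p := by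
  have hple : ∀ a, p a ≤ 1 := by
    intro a
    rw [← h.2]
    exact Finset.single_le_sum (fun b _ => h.1 b) (Finset.mem_univ a)
  have : ∀ a, p a * Real.logb 2 (p a) ≤ 0 := by
    intro a
    exact mul_nonpos_of_nonneg_of_nonpos (h.1 a)
      (Real.logb_nonpos one_lt_two (h.1 a) (hple a))
  have hs : ∑ a, p a * Real.logb 2 (p a) ≤ 0 :=
    Finset.sum_nonpos fun a _ => this a
  simpa [ent] using hs

lemma ent_le_card {α : Type} [Fintype α] {p : α → ℝ} (h : ∀ a, 0 ≤ p a) :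
    ent p ≤ (Fintype.card α : ℝ) / Real.log 2 := by
  have hlog2 : (0:ℝ) < Real.log 2 := Real.log_pos one_lt_two
  have hterm : ∀ a, -(p a * Real.logb 2 (p a)) ≤ 1 / Real.log 2 := by
    intro a
    rcases eq_or_lt_of_le (h a) with h0 | h0
    · simp [← h0]
      positivity
    · have hinv : Real.log (p a)⁻¹ ≤ (p a)⁻¹ - 1 :=
        Real.log_le_sub_one_of_pos (by positivity)
      rw [Real.log_inv] at hinv
      have : -(Real.log (p a)) ≤ (p a)⁻¹ - 1 := by linarith
      have h2 : -(p a * Real.log (p a)) ≤ p a * ((p a)⁻¹ - 1) := by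
        have := mul_le_mul_of_nonneg_left this (le_of_lt h0)
        linarith [this]
      have h3 : p a * ((p a)⁻¹ - 1) ≤ 1 := by
        rw [mul_sub, mul_inv_cancel₀ (ne_of_gt h0)]
        nlinarith [h a]
      rw [Real.logb, show -(p a * (Real.log (p a) / Real.log 2))
            = (-(p a * Real.log (p a))) / Real.log 2 from by ring,
          div_le_div_iff₀ hlog2 hlog2]
      nlinarith
  calc ent p = ∑ a, -(p a * Real.logb 2 (p a)) := by simp [ent]
    _ ≤ ∑ _a : α, 1 / Real.log 2 := Finset.sum_le_sum fun a _ => hterm a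
    _ = (Fintype.card α : ℝ) / Real.log 2 := by
        rw [Finset.sum_const, nsmul_eq_mul, Finset.card_univ]
        ring

section TypeIdentities

variable {𝒰 𝒳₁ : Type} [Fintype 𝒰] [Fintype 𝒳₁] [DecidableEq 𝒰] [DecidableEq 𝒳₁]
  {n : ℕ}

lemma jt3_nonneg (x : Fin n → 𝒳₁) (u v : Fin n → 𝒰) (a : 𝒳₁) (b c : 𝒰) :
    0 ≤ jointType₃ x u v a b c := by
  unfold jointType₃; positivity

lemma jt3_sum_total (hn : 1 ≤ n) (x : Fin n → 𝒳₁) (u v : Fin n → 𝒰) :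
    ∑ t : 𝒳₁ × 𝒰 × 𝒰, jointType₃ x u v t.1 t.2.1 t.2.2 = 1 := by
  unfold jointType₃
  rw [← Finset.sum_div]
  rw [div_eq_one_iff_eq (by exact_mod_cast Nat.pos_of_ne_zero (by omega) |>.ne')]
  push_cast
  have := Finset.card_eq_sum_card_fiberwise
    (f := fun i : Fin n => ((x i, u i, v i) : 𝒳₁ × 𝒰 × 𝒰)) (s := Finset.univ)
    (t := Finset.univ) (fun i _ => Finset.mem_univ _)
  rw [Finset.card_univ, Fintype.card_fin] at this
  rw [← Nat.cast_sum]
  norm_cast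
  refine Eq.trans ?_ this.symm
  apply Finset.sum_congr rfl
  intro t _
  congr 1
  ext i
  simp [Prod.ext_iff]

lemma jt3_sum_x (x : Fin n → 𝒳₁) (u v : Fin n → 𝒰) (a b : 𝒰) :
    ∑ c, jointType₃ x u v c a b = jointType₂ u v a b := by
  unfold jointType₃ jointType₂
  rw [← Finset.sum_div]
  congr 1
  rw [← Nat.cast_sum]
  norm_cast
  rw [Finset.card_eq_sum_card_fiberwise (f := x) (t := Finset.univ)
    (fun i _ => Finset.mem_univ _)]
  apply Finset.sum_congr rfl
  intro c _
  congr 1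
  ext i
  simp only [Finset.mem_filter, Finset.mem_univ, true_and]
  tauto

lemma jt3_sum_v (x : Fin n → 𝒳₁) (u v : Fin n → 𝒰) (c : 𝒳₁) (a : 𝒰) :
    ∑ b, jointType₃ x u v c a b = jointType₂ x u c a := by
  unfold jointType₃ jointType₂
  rw [← Finset.sum_div]
  congr 1
  rw [← Nat.cast_sum]
  norm_cast
  rw [Finset.card_eq_sum_card_fiberwise (f := v) (t := Finset.univ)
    (fun i _ => Finset.mem_univ _)]
  apply Finset.sum_congr rfl
  intro b _
  congr 1
  ext i
  simp only [Finset.mem_filter, Finset.mem_univ, true_and]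
  tauto

lemma jt3_sum_u (x : Fin n → 𝒳₁) (u v : Fin n → 𝒰) (c : 𝒳₁) (b : 𝒰) :
    ∑ a, jointType₃ x u v c a b = jointType₂ x v c b := by
  unfold jointType₃ jointType₂
  rw [← Finset.sum_div]
  congr 1
  rw [← Nat.cast_sum]
  norm_cast
  rw [Finset.card_eq_sum_card_fiberwise (f := u) (t := Finset.univ)
    (fun i _ => Finset.mem_univ _)]
  apply Finset.sum_congr rfl
  intro a _
  congr 1
  ext i
  simp only [Finset.mem_filter, Finset.mem_univ, true_and]
  tauto

lemma jt2_sum_x (x : Fin n → 𝒳₁) (u : Fin n → 𝒰) (a : 𝒰) :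
    ∑ c, jointType₂ x u c a = seqType u a := by
  unfold jointType₂ seqType
  rw [← Finset.sum_div]
  congr 1
  rw [← Nat.cast_sum]
  norm_cast
  rw [Finset.card_eq_sum_card_fiberwise (f := x) (t := Finset.univ)
    (fun i _ => Finset.mem_univ _)]
  apply Finset.sum_congr rfl
  intro c _
  congr 1
  ext i
  simp only [Finset.mem_filter, Finset.mem_univ, true_and]
  tauto

end TypeIdentities

section ProdFormula

variable {𝒰 𝒳₁ : Type} [Fintype 𝒰] [Fintype 𝒳₁] [DecidableEq 𝒰] [DecidableEq 𝒳₁]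
  {n : ℕ}

lemma jt3_pos_at (x : Fin n → 𝒳₁) (u v : Fin n → 𝒰) (i : Fin n) :
    0 < jointType₃ x u v (x i) (u i) (v i) := by
  unfold jointType₃
  have hn : (0:ℝ) < n := by
    have : 0 < n := i.pos
    exact_mod_cast this
  apply div_pos _ hn
  have : i ∈ Finset.univ.filter fun j => x j = x i ∧ u j = u i ∧ v j = v i := by
    simp
  exact_mod_cast Finset.card_pos.mpr ⟨i, this⟩

lemma jt2_pos_at (u v : Fin n → 𝒰) (i : Fin n) :
    0 < jointType₂ u v (u i) (v i) := by
  unfold jointType₂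
  have hn : (0:ℝ) < n := by
    have : 0 < n := i.pos
    exact_mod_cast this
  apply div_pos _ hn
  have : i ∈ Finset.univ.filter fun j => u j = u i ∧ v j = v i := by simp
  exact_mod_cast Finset.card_pos.mpr ⟨i, this⟩

/-- Sum of logs grouped by fibers: triple version. -/
lemma sum_log_jt3 (hn : 1 ≤ n) (x : Fin n → 𝒳₁) (u v : Fin n → 𝒰) :
    ∑ i, Real.log (jointType₃ x u v (x i) (u i) (v i))
      = (n : ℝ) * ∑ t : 𝒳₁ × 𝒰 × 𝒰,
          jointType₃ x u v t.1 t.2.1 t.2.2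
            * Real.log (jointType₃ x u v t.1 t.2.1 t.2.2) := by
  have hfib := Finset.sum_fiberwise (Finset.univ : Finset (Fin n))
    (fun i => ((x i, u i, v i) : 𝒳₁ × 𝒰 × 𝒰))
    (fun i => Real.log (jointType₃ x u v (x i) (u i) (v i)))
  rw [← hfib, Finset.mul_sum]
  apply Finset.sum_congr rfl
  intro t _
  have hcount : ∀ i ∈ Finset.univ.filter
      (fun i => ((x i, u i, v i) : 𝒳₁ × 𝒰 × 𝒰) = t),
      Real.log (jointType₃ x u v (x i) (u i) (v i))
        = Real.log (jointType₃ x u v t.1 t.2.1 t.2.2) := by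
    intro i hi
    simp only [Finset.mem_filter, Finset.mem_univ, true_and] at hi
    rw [← hi]
  rw [Finset.sum_congr rfl hcount, Finset.sum_const, nsmul_eq_mul]
  have hval : jointType₃ x u v t.1 t.2.1 t.2.2
      = ((Finset.univ.filter fun i => ((x i, u i, v i) : 𝒳₁ × 𝒰 × 𝒰) = t).card : ℝ) / n := by
    unfold jointType₃
    have hset : (Finset.univ.filter fun i => x i = t.1 ∧ u i = t.2.1 ∧ v i = t.2.2)
        = Finset.univ.filter fun i => ((x i, u i, v i) : 𝒳₁ × 𝒰 × 𝒰) = t := by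
      ext i; simp [Prod.ext_iff]
    rw [hset]
  rw [hval]
  have hn' : (n:ℝ) ≠ 0 := by
    have : 0 < n := by omega
    exact_mod_cast this.ne'
  field_simp

/-- Sum of logs grouped by fibers: pair version. -/
lemma sum_log_jt2 (hn : 1 ≤ n) (u v : Fin n → 𝒰) :
    ∑ i, Real.log (jointType₂ u v (u i) (v i))
      = (n : ℝ) * ∑ t : 𝒰 × 𝒰,
          jointType₂ u v t.1 t.2 * Real.log (jointType₂ u v t.1 t.2) := by
  have hfib := Finset.sum_fiberwise (Finset.univ : Finset (Fin n))
    (fun i => ((u i, v i) : 𝒰 × 𝒰))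
    (fun i => Real.log (jointType₂ u v (u i) (v i)))
  rw [← hfib, Finset.mul_sum]
  apply Finset.sum_congr rfl
  intro t _
  have hcount : ∀ i ∈ Finset.univ.filter
      (fun i => ((u i, v i) : 𝒰 × 𝒰) = t),
      Real.log (jointType₂ u v (u i) (v i))
        = Real.log (jointType₂ u v t.1 t.2) := by
    intro i hi
    simp only [Finset.mem_filter, Finset.mem_univ, true_and] at hi
    rw [← hi]
  rw [Finset.sum_congr rfl hcount, Finset.sum_const, nsmul_eq_mul]
  have hval : jointType₂ u v t.1 t.2
      = ((Finset.univ.filter fun i => ((u i, v i) : 𝒰 × 𝒰) = t).card : ℝ) / n := by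
    unfold jointType₂
    have hset : (Finset.univ.filter fun i => u i = t.1 ∧ v i = t.2)
        = Finset.univ.filter fun i => ((u i, v i) : 𝒰 × 𝒰) = t := by
      ext i; simp [Prod.ext_iff]
    rw [hset]
  rw [hval]
  have hn' : (n:ℝ) ≠ 0 := by
    have : 0 < n := by omega
    exact_mod_cast this.ne'
  field_simp

lemma prod_type_eq (hn : 1 ≤ n) (x : Fin n → 𝒳₁) (u v : Fin n → 𝒰) :
    ∏ i, (jointType₃ x u v (x i) (u i) (v i) / jointType₂ u v (u i) (v i))
      = (2:ℝ) ^ (-((n:ℝ) * condEnt3 (jointType₃ x u v))) := by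
  have hlog2 : (0:ℝ) < Real.log 2 := Real.log_pos one_lt_two
  have hai : ∀ i : Fin n, 0 < jointType₃ x u v (x i) (u i) (v i) := jt3_pos_at x u v
  have hbi : ∀ i : Fin n, 0 < jointType₂ u v (u i) (v i) := jt2_pos_at u v
  have hpos : 0 < ∏ i, (jointType₃ x u v (x i) (u i) (v i) / jointType₂ u v (u i) (v i)) :=
    Finset.prod_pos fun i _ => div_pos (hai i) (hbi i)
  have hlogP : Real.log (∏ i, (jointType₃ x u v (x i) (u i) (v i)
        / jointType₂ u v (u i) (v i)))
      = (n:ℝ) * (∑ t : 𝒳₁ × 𝒰 × 𝒰, jointType₃ x u v t.1 t.2.1 t.2.2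
          * Real.log (jointType₃ x u v t.1 t.2.1 t.2.2))
        - (n:ℝ) * (∑ t : 𝒰 × 𝒰, jointType₂ u v t.1 t.2
          * Real.log (jointType₂ u v t.1 t.2)) := by
    rw [Real.log_prod (fun i _ => (div_pos (hai i) (hbi i)).ne')]
    have hdiv : ∀ i : Fin n,
        Real.log (jointType₃ x u v (x i) (u i) (v i) / jointType₂ u v (u i) (v i))
        = Real.log (jointType₃ x u v (x i) (u i) (v i))
          - Real.log (jointType₂ u v (u i) (v i)) :=
      fun i => Real.log_div (hai i).ne' (hbi i).ne'
    rw [Finset.sum_congr rfl fun i _ => hdiv i, Finset.sum_sub_distrib,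
        sum_log_jt3 hn x u v, sum_log_jt2 hn u v]
  have hcond : condEnt3 (jointType₃ x u v)
      = (-(∑ t : 𝒳₁ × 𝒰 × 𝒰, jointType₃ x u v t.1 t.2.1 t.2.2
            * Real.log (jointType₃ x u v t.1 t.2.1 t.2.2))
        + (∑ t : 𝒰 × 𝒰, jointType₂ u v t.1 t.2
            * Real.log (jointType₂ u v t.1 t.2))) / Real.log 2 := by
    unfold condEnt3 ent
    have hmarg : (fun t : 𝒰 × 𝒰 => ∑ a, jointType₃ x u v a t.1 t.2)
        = fun t : 𝒰 × 𝒰 => jointType₂ u v t.1 t.2 :=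
      funext fun t => jt3_sum_x x u v t.1 t.2
    rw [hmarg]
    simp only [Real.logb, ← mul_div_assoc, ← Finset.sum_div]
    ring
  rw [← Real.rpow_logb two_pos (by norm_num) hpos]
  congr 1
  rw [Real.logb, hlogP, hcond]
  field_simp
  ring

end ProdFormula

section Main

variable {𝒰 𝒳₁ : Type} [Fintype 𝒰] [Fintype 𝒳₁] [DecidableEq 𝒰] [DecidableEq 𝒳₁]
  {n : ℕ}

lemma jt2_nonneg (u : Fin n → 𝒳₁) (w : Fin n → 𝒰) (a : 𝒳₁) (b : 𝒰) :
    0 ≤ jointType₂ u w a b := by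
  unfold jointType₂; positivity

/-- Count function used to classify sequences by their joint type with `(u,v)`. -/
def countF (u v : Fin n → 𝒰) (y : Fin n → 𝒳₁) (t : 𝒳₁ × 𝒰 × 𝒰) : Fin (n+1) :=
  ⟨(Finset.univ.filter fun i => y i = t.1 ∧ u i = t.2.1 ∧ v i = t.2.2).card,
    Nat.lt_succ_of_le ((Finset.card_filter_le _ _).trans (by simp))⟩

lemma jt3_eq_of_countF_eq (u v : Fin n → 𝒰) {y z : Fin n → 𝒳₁}
    (h : countF u v y = countF u v z) : jointType₃ y u v = jointType₃ z u v := by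
  funext a b d
  have hval := congrArg Fin.val (congrFun h (a, b, d))
  unfold jointType₃
  rw [show ((Finset.univ.filter fun i => y i = a ∧ u i = b ∧ v i = d).card)
      = ((Finset.univ.filter fun i => z i = a ∧ u i = b ∧ v i = d).card) from hval]

end Main

set_option maxHeartbeats 1000000

/-- the set `S` of sequences `x₁ⁿ` whose conditional types given `uⁿ`
and given `vⁿ` are both `μ̃`-close to `Q` has size at most
`(n+1)^{|𝒳₁||𝒰|²} 2^{n H*}`, where `H*` is the supremum of `H(X̃₁|Ũ,Ṽ)` over all
joint pmfs matching the joint type of `(uⁿ, vⁿ)` whose backward channels are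
`μ̃`-close to `Q` (with `H* = 0` when no such pmf exists, in which case `S` is
empty). -/
theorem card_doubly_conditionally_typical_bound
    {𝒰 𝒳₁ : Type} [Fintype 𝒰] [Fintype 𝒳₁] [DecidableEq 𝒰] [DecidableEq 𝒳₁]
    (Q : 𝒰 → 𝒳₁ → ℝ) (hQ : ∀ u, IsPMF (Q u))
    (μt : ℝ) (hμt : 0 < μt) (n : ℕ) (hn : 1 ≤ n) (u v : Fin n → 𝒰) :
    let S : Finset (Fin n → 𝒳₁) := Finset.univ.filter fun x =>
      (∀ b a, 0 < seqType u a → |jointType₂ x u b a / seqType u a - Q a b| ≤ μt) ∧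
      (∀ b a, 0 < seqType v a → |jointType₂ x v b a / seqType v a - Q a b| ≤ μt)
    let E : Set ℝ := { h | ∃ pt : 𝒳₁ → 𝒰 → 𝒰 → ℝ,
      (IsPMF fun t : 𝒳₁ × 𝒰 × 𝒰 => pt t.1 t.2.1 t.2.2) ∧
      (∀ a b, ∑ x, pt x a b = jointType₂ u v a b) ∧
      (∀ x a, 0 < (∑ x', ∑ b, pt x' a b) →
        |(∑ b, pt x a b) / (∑ x', ∑ b, pt x' a b) - Q a x| ≤ μt) ∧
      (∀ x b, 0 < (∑ x', ∑ a, pt x' a b) →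
        |(∑ a, pt x a b) / (∑ x', ∑ a, pt x' a b) - Q b x| ≤ μt) ∧
      h = condEnt3 pt }
    (E = ∅ → S = ∅) ∧
    (S.card : ℝ) ≤ ((n : ℝ) + 1) ^ (Fintype.card 𝒳₁ * Fintype.card 𝒰 ^ 2)
        * (2 : ℝ) ^ ((n : ℝ) * sSup E) := by
  intro S E
  -- membership of the own type of any x ∈ S in E
  have hmemE : ∀ x ∈ S, condEnt3 (jointType₃ x u v) ∈ E := by
    intro x hx
    rw [Finset.mem_filter] at hx
    obtain ⟨-, h1, h2⟩ := hx
    refine ⟨jointType₃ x u v, ⟨fun t => jt3_nonneg x u v _ _ _, jt3_sum_total hn x u v⟩,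
      fun a b => jt3_sum_x x u v a b, ?_, ?_, rfl⟩
    · intro b a hpos
      have e2 : (∑ x', ∑ b', jointType₃ x u v x' a b') = seqType u a := by
        rw [Finset.sum_congr rfl fun c _ => jt3_sum_v x u v c a]
        exact jt2_sum_x x u a
      rw [e2] at hpos ⊢
      rw [jt3_sum_v x u v b a]
      exact h1 b a hpos
    · intro b a hpos
      have e2 : (∑ x', ∑ a', jointType₃ x u v x' a' a) = seqType v a := by
        rw [Finset.sum_congr rfl fun c _ => jt3_sum_u x u v c a]
        exact jt2_sum_x x v a
      rw [e2] at hpos ⊢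
      rw [jt3_sum_u x u v b a]
      exact h2 b a hpos
  constructor
  · intro hE
    rw [Finset.eq_empty_iff_forall_notMem]
    intro x hx
    have := hmemE x hx
    rw [hE] at this
    exact this
  rcases Finset.eq_empty_or_nonempty S with hS | ⟨x₀, hx₀⟩
  · rw [hS]
    simp only [Finset.card_empty, Nat.cast_zero]
    positivity
  have hbdd : BddAbove E := by
    refine ⟨(Fintype.card (𝒳₁ × 𝒰 × 𝒰) : ℝ) / Real.log 2, ?_⟩
    rintro h ⟨pt, hpmf, -, -, -, rfl⟩
    have hA := ent_le_card (p := fun t : 𝒳₁ × 𝒰 × 𝒰 => pt t.1 t.2.1 t.2.2)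
      (fun t => hpmf.1 t)
    have hBpmf : IsPMF fun t : 𝒰 × 𝒰 => ∑ a, pt a t.1 t.2 := by
      constructor
      · exact fun t => Finset.sum_nonneg fun a _ => hpmf.1 (a, t.1, t.2)
      · have := hpmf.2
        rw [Fintype.sum_prod_type] at this
        rw [← this, Finset.sum_comm]
    have hB := ent_nonneg hBpmf
    unfold condEnt3
    linarith
  have hEcast : ∀ x ∈ S, condEnt3 (jointType₃ x u v) ≤ sSup E :=
    fun x hx => le_csSup hbdd (hmemE x hx)
  -- fiber decomposition
  have hcard : (S.card : ℝ)
      = ∑ j ∈ S.image (countF u v), ((S.filter fun y => countF u v y = j).card : ℝ) := by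
    norm_cast
    exact Finset.card_eq_sum_card_fiberwise fun y hy => Finset.mem_image_of_mem _ hy
  have hfiber : ∀ j ∈ S.image (countF u v),
      ((S.filter fun y => countF u v y = j).card : ℝ) ≤ (2:ℝ) ^ ((n:ℝ) * sSup E) := by
    intro j hj
    obtain ⟨x₁, hx₁S, hx₁j⟩ := Finset.mem_image.mp hj
    set F := S.filter fun y => countF u v y = j with hF
    have hprod : ∀ y ∈ F, ∏ i, (jointType₃ x₁ u v (y i) (u i) (v i)
        / jointType₂ u v (u i) (v i))
        = (2:ℝ) ^ (-((n:ℝ) * condEnt3 (jointType₃ x₁ u v))) := by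
      intro y hy
      rw [hF, Finset.mem_filter] at hy
      have htyp : jointType₃ y u v = jointType₃ x₁ u v :=
        jt3_eq_of_countF_eq u v (hy.2.trans hx₁j.symm)
      rw [← htyp]
      exact prod_type_eq hn y u v
    have hsum : (F.card : ℝ) * (2:ℝ) ^ (-((n:ℝ) * condEnt3 (jointType₃ x₁ u v))) ≤ 1 := by
      have heq : (F.card : ℝ) * (2:ℝ) ^ (-((n:ℝ) * condEnt3 (jointType₃ x₁ u v)))
          = ∑ y ∈ F, ∏ i, (jointType₃ x₁ u v (y i) (u i) (v i)
            / jointType₂ u v (u i) (v i)) := by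
        rw [Finset.sum_congr rfl hprod, Finset.sum_const, nsmul_eq_mul]
      rw [heq]
      calc ∑ y ∈ F, ∏ i, (jointType₃ x₁ u v (y i) (u i) (v i)
            / jointType₂ u v (u i) (v i))
          ≤ ∑ y ∈ Fintype.piFinset (fun _ : Fin n => (Finset.univ : Finset 𝒳₁)),
            ∏ i, (jointType₃ x₁ u v (y i) (u i) (v i) / jointType₂ u v (u i) (v i)) := by
            apply Finset.sum_le_sum_of_subset_of_nonneg
            · intro y _
              simp [Fintype.mem_piFinset]
            · intro y _ _
              exact Finset.prod_nonneg fun i _ =>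
                div_nonneg (jt3_nonneg x₁ u v _ _ _) (jt2_nonneg u v _ _)
        _ = ∏ i, ∑ a, (jointType₃ x₁ u v a (u i) (v i) / jointType₂ u v (u i) (v i)) :=
            (Finset.prod_univ_sum (fun _ : Fin n => (Finset.univ : Finset 𝒳₁))
              (fun i a => jointType₃ x₁ u v a (u i) (v i)
                / jointType₂ u v (u i) (v i))).symm
        _ = 1 := by
            apply Finset.prod_eq_one
            intro i _
            rw [← Finset.sum_div, jt3_sum_x x₁ u v (u i) (v i)]
            exact div_self (jt2_pos_at u v i).ne'
    have h2pos : (0:ℝ) < (2:ℝ) ^ ((n:ℝ) * condEnt3 (jointType₃ x₁ u v)) :=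
      Real.rpow_pos_of_pos two_pos _
    have hFle : (F.card : ℝ) ≤ (2:ℝ) ^ ((n:ℝ) * condEnt3 (jointType₃ x₁ u v)) := by
      have hm := mul_le_mul_of_nonneg_right hsum h2pos.le
      rwa [one_mul, mul_assoc, ← Real.rpow_add two_pos, neg_add_cancel,
        Real.rpow_zero, mul_one] at hm
    refine hFle.trans (Real.rpow_le_rpow_of_exponent_le one_le_two ?_)
    exact mul_le_mul_of_nonneg_left (hEcast x₁ hx₁S) (Nat.cast_nonneg n)
  have himg : ((S.image (countF u v)).card : ℝ)
      ≤ ((n : ℝ) + 1) ^ (Fintype.card 𝒳₁ * Fintype.card 𝒰 ^ 2) := by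
    have h1 : (S.image (countF u v)).card ≤ Fintype.card (𝒳₁ × 𝒰 × 𝒰 → Fin (n+1)) := by
      rw [← Finset.card_univ]
      exact Finset.card_le_univ _
    have h2 : Fintype.card (𝒳₁ × 𝒰 × 𝒰 → Fin (n+1))
        = (n+1) ^ (Fintype.card 𝒳₁ * Fintype.card 𝒰 ^ 2) := by
      rw [Fintype.card_fun, Fintype.card_fin, Fintype.card_prod, Fintype.card_prod]
      ring_nf
    rw [h2] at h1
    exact_mod_cast h1
  calc (S.card : ℝ)
      = ∑ j ∈ S.image (countF u v), ((S.filter fun y => countF u v y = j).card : ℝ) := hcard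
    _ ≤ ∑ _j ∈ S.image (countF u v), (2:ℝ) ^ ((n:ℝ) * sSup E) :=
        Finset.sum_le_sum hfiber
    _ = ((S.image (countF u v)).card : ℝ) * (2:ℝ) ^ ((n:ℝ) * sSup E) := by
        rw [Finset.sum_const, nsmul_eq_mul]
    _ ≤ ((n : ℝ) + 1) ^ (Fintype.card 𝒳₁ * Fintype.card 𝒰 ^ 2)
        * (2:ℝ) ^ ((n:ℝ) * sSup E) :=
        mul_le_mul_of_nonneg_right himg (Real.rpow_pos_of_pos two_pos _).le
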